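/- arXiv:0706.3637 — 2 statements merged into one kernel-verified Lean document; each statement's English description precedes it below -/
import Mathlib

section
/- Let q(s) = 1 / max(1, s·log s) and Q(k) = ∫₀ᵏ q(s) ds. For all R̄ ≥ 0 and n̄ ≥ 2R̄ (with n̄ > R̄), the integral over the square Λ_{n̄} = [-n̄, n̄)² of q(|x| - R̄)² dx (where |x| is the maximum norm, and q is extended by q(t) = 1 for t < 0) is at most 16R̄² + 32·Q(n̄ - R̄). -/
open MeasureTheory

/-- `q` extended by `q t = 1` for `t < 0`. -/
noncomputable def qext (t : ℝ) : ℝ := if t < 0 then 1 else 1 / max 1 (t * Real.log t)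

lemma qext_eq (t : ℝ) : qext t = 1 / max 1 (t * Real.log t) := by
  unfold qext
  split_ifs with h
  · have hs : (0:ℝ) < -t := by linarith
    have h1 : Real.log ((-t)⁻¹) ≤ (-t)⁻¹ - 1 := Real.log_le_sub_one_of_pos (by positivity)
    rw [Real.log_inv] at h1
    have hlog : Real.log (-t) = Real.log t := Real.log_neg_eq_log t
    have h2 : t * Real.log t ≤ 1 := by
      have h4 : (-t) * (-Real.log (-t)) ≤ (-t) * ((-t)⁻¹ - 1) :=
        mul_le_mul_of_nonneg_left h1 (le_of_lt hs)
      have h5 : (-t) * (-t)⁻¹ = 1 := mul_inv_cancel₀ (ne_of_gt hs)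
      nlinarith [h4, h5, hlog]
    rw [max_eq_left h2, div_one]
  · rfl

lemma qext_nonneg (t : ℝ) : 0 ≤ qext t := by
  rw [qext_eq]
  have : (1:ℝ) ≤ max 1 (t * Real.log t) := le_max_left _ _
  positivity

lemma qext_le_one (t : ℝ) : qext t ≤ 1 := by
  rw [qext_eq]
  have h : (1:ℝ) ≤ max 1 (t * Real.log t) := le_max_left _ _
  rw [div_le_one (by linarith)]
  exact h

lemma qext_cont : Continuous qext := by
  have : qext = fun t => 1 / max 1 (t * Real.log t) := funext qext_eq
  rw [this]
  apply continuous_const.div (continuous_const.max Real.continuous_mul_log)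
  intro x
  have : (1:ℝ) ≤ max 1 (x * Real.log x) := le_max_left _ _
  linarith

lemma mul_qext_sq_le (t : ℝ) (ht : 0 ≤ t) : t * (qext t)^2 ≤ 2 * qext t := by
  rw [qext_eq]
  set M := max 1 (t * Real.log t) with hMdef
  have hM : (1:ℝ) ≤ M := le_max_left _ _
  have hMpos : (0:ℝ) < M := by linarith
  have key : t ≤ 2 * M := by
    rcases le_or_gt t 2 with h | h
    · linarith
    · have hlog : (0.6931471803 : ℝ) < Real.log 2 := Real.log_two_gt_d9
      have h2 : Real.log 2 ≤ Real.log t := Real.log_le_log (by norm_num) (by linarith)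
      have h3 : t * (1/2 : ℝ) ≤ t * Real.log t := by nlinarith
      have h4 : t * Real.log t ≤ M := le_max_right _ _
      linarith
  have h1 : t * (1 / M ^ 2) = t / M ^ 2 := by ring
  have h2 : 2 * (1 / M) = 2 / M := by ring
  rw [div_pow, one_pow, h1, h2, div_le_div_iff₀ (by positivity) hMpos]
  nlinarith [key, hMpos]

theorem stmt_4 (Q : ℝ → ℝ) (hQ : ∀ k : ℝ, Q k = ∫ s in (0:ℝ)..k, qext s)
    (R n : ℝ) (hR : 0 ≤ R) (hn2 : 2 * R ≤ n) (hRn : R < n) :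
    (∫ x in (Set.Ico (-n) n ×ˢ Set.Ico (-n) n : Set (ℝ × ℝ)),
        (qext (max |x.1| |x.2| - R))^2) ≤ 16 * R^2 + 32 * Q (n - R) := by
  have hn0 : (0:ℝ) ≤ n := by linarith
  set S : Set ℝ := Set.Ico (-n) n with hS
  set μ : Measure ℝ := volume.restrict S with hμ
  haveI : IsFiniteMeasure μ := by
    constructor
    rw [hμ, Measure.restrict_apply_univ, hS, Real.volume_Ico]
    exact ENNReal.ofReal_lt_top
  set g : ℝ → ℝ := fun a => (qext (a - R))^2 with hg
  have hg_cont : Continuous g := (qext_cont.comp (continuous_id.sub continuous_const)).pow 2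
  have hg_nonneg : ∀ a, 0 ≤ g a := fun a => sq_nonneg _
  have hg_le_one : ∀ a, g a ≤ 1 := by
    intro a
    have h1 := qext_le_one (a - R); have h2 := qext_nonneg (a - R)
    simp only [hg]
    nlinarith
  set H : ℝ × ℝ → ℝ := fun x => if |x.2| ≤ |x.1| then g |x.1| else 0 with hH
  have hH_nonneg : ∀ x, 0 ≤ H x := by
    intro x; simp only [hH]; split_ifs
    · exact hg_nonneg _
    · exact le_refl 0
  have hH_bdd : ∀ x, ‖H x‖ ≤ 1 := by
    intro x
    rw [Real.norm_eq_abs, abs_le]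
    constructor
    · linarith [hH_nonneg x]
    · simp only [hH]; split_ifs
      · exact hg_le_one _
      · norm_num
  have hA : MeasurableSet {x : ℝ × ℝ | |x.2| ≤ |x.1|} :=
    measurableSet_le (continuous_snd.abs.measurable) (continuous_fst.abs.measurable)
  have hH_meas : StronglyMeasurable H := by
    have hind : H = Set.indicator {x : ℝ × ℝ | |x.2| ≤ |x.1|} (fun x => g |x.1|) := by
      funext x
      simp only [hH, Set.indicator, Set.mem_setOf_eq]
    rw [hind]
    exact ((hg_cont.comp (continuous_fst.abs)).stronglyMeasurable).indicator hA
  have int_H : Integrable H (μ.prod μ) :=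
    ⟨hH_meas.aestronglyMeasurable, HasFiniteIntegral.of_bounded (ae_of_all _ hH_bdd)⟩
  have int_Hswap : Integrable (fun x : ℝ × ℝ => H x.swap) (μ.prod μ) :=
    ⟨(hH_meas.comp_measurable measurable_swap).aestronglyMeasurable,
      HasFiniteIntegral.of_bounded (ae_of_all _ fun x => hH_bdd _)⟩
  set F : ℝ × ℝ → ℝ := fun x => (qext (max |x.1| |x.2| - R))^2 with hF
  have hF_cont : Continuous F :=
    (qext_cont.comp ((continuous_fst.abs.max continuous_snd.abs).sub continuous_const)).pow 2
  have hF_bdd : ∀ x, ‖F x‖ ≤ 1 := by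
    intro x
    rw [Real.norm_eq_abs, abs_le]
    have h1 := qext_le_one (max |x.1| |x.2| - R)
    have h2 := qext_nonneg (max |x.1| |x.2| - R)
    constructor <;> simp only [hF] <;> nlinarith
  have int_F : Integrable F (μ.prod μ) :=
    ⟨hF_cont.stronglyMeasurable.aestronglyMeasurable,
      HasFiniteIntegral.of_bounded (ae_of_all _ hF_bdd)⟩
  have hvol : (volume : Measure (ℝ × ℝ)).restrict (S ×ˢ S) = μ.prod μ := by
    rw [hμ, Measure.prod_restrict, Measure.volume_eq_prod]
  -- pointwise bound F ≤ H + H ∘ swap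
  have hpt : ∀ x : ℝ × ℝ, F x ≤ H x + H x.swap := by
    intro x
    rcases le_or_gt |x.2| |x.1| with h | h
    · have hmax : max |x.1| |x.2| = |x.1| := max_eq_left h
      have hHx : H x = g |x.1| := if_pos h
      have : F x = g |x.1| := by simp only [hF, hg, hmax]
      rw [this, hHx]
      linarith [hH_nonneg x.swap]
    · have hmax : max |x.1| |x.2| = |x.2| := max_eq_right h.le
      have hHx : H x = 0 := if_neg (not_le.mpr h)
      have hHs : H x.swap = g |x.2| := if_pos h.le
      have : F x = g |x.2| := by simp only [hF, hg, hmax]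
      rw [this, hHx, hHs]
      linarith
  have step1 : ∫ x, F x ∂(μ.prod μ) ≤ ∫ x, (H x + H x.swap) ∂(μ.prod μ) :=
    integral_mono int_F (int_H.add int_Hswap) hpt
  have step2 : ∫ x, H x.swap ∂(μ.prod μ) = ∫ x, H x ∂(μ.prod μ) :=
    (Measure.measurePreserving_swap (μ := μ) (ν := μ)).integral_comp
      MeasurableEquiv.prodComm.measurableEmbedding H
  have step2' : ∫ x, (H x + H x.swap) ∂(μ.prod μ) = 2 * ∫ x, H x ∂(μ.prod μ) := by
    rw [integral_add int_H int_Hswap, step2]; ring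
  have step3 : ∫ x, H x ∂(μ.prod μ) = ∫ a, (∫ b, H (a, b) ∂μ) ∂μ :=
    integral_prod H int_H
  -- inner integral bound
  have inner_le : ∀ a : ℝ, (∫ b, H (a, b) ∂μ) ≤ 2 * |a| * g |a| := by
    intro a
    have hfun : (fun b : ℝ => H (a, b)) =
        Set.indicator (Set.Icc (-|a|) |a|) (fun _ => g |a|) := by
      funext b
      simp only [hH, Set.indicator, Set.mem_Icc]
      rcases le_or_gt |b| |a| with h | h
      · rw [if_pos h, if_pos (abs_le.mp h)]
      · rw [if_neg (not_le.mpr h), if_neg]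
        rw [← abs_le]; exact not_le.mpr h
    rw [hfun, integral_indicator measurableSet_Icc, setIntegral_const, smul_eq_mul]
    have hm : (μ (Set.Icc (-|a|) |a|)).toReal ≤ 2 * |a| := by
      have h1 : μ (Set.Icc (-|a|) |a|) ≤ volume (Set.Icc (-|a|) |a|) :=
        Measure.restrict_le_self _
      have h2 : volume (Set.Icc (-|a|) |a|) = ENNReal.ofReal (2 * |a|) := by
        rw [Real.volume_Icc]; congr 1; ring
      calc (μ (Set.Icc (-|a|) |a|)).toReal
          ≤ (volume (Set.Icc (-|a|) |a|)).toReal :=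
            ENNReal.toReal_mono (by rw [h2]; exact ENNReal.ofReal_ne_top) h1
        _ = 2 * |a| := by rw [h2, ENNReal.toReal_ofReal (by positivity)]
    exact mul_le_mul_of_nonneg_right hm (hg_nonneg _)
  have int_inner : Integrable (fun a => ∫ b, H (a, b) ∂μ) μ := int_H.integral_prod_left
  have hψ_cont : Continuous (fun a : ℝ => 2 * |a| * g |a|) :=
    (continuous_const.mul continuous_abs).mul (hg_cont.comp continuous_abs)
  have int_ψ : Integrable (fun a : ℝ => 2 * |a| * g |a|) μ := by
    rw [hμ]
    exact (hψ_cont.integrableOn_Icc (a := -n) (b := n)).mono_set Set.Ico_subset_Icc_self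
  have step4 : ∫ a, (∫ b, H (a, b) ∂μ) ∂μ ≤ ∫ a, 2 * |a| * g |a| ∂μ :=
    integral_mono int_inner int_ψ inner_le
  -- compute ∫ ψ dμ
  have step5 : ∫ a, 2 * |a| * g |a| ∂μ = 2 * ∫ a in (0:ℝ)..n, 2 * (a * g a) := by
    have e1 : ∫ a, 2 * |a| * g |a| ∂μ = ∫ a in Set.Ioc (-n) n, 2 * |a| * g |a| := by
      rw [hμ, hS, restrict_Ico_eq_restrict_Ioc]
    have e2 : ∫ a in Set.Ioc (-n) n, 2 * |a| * g |a| =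
        ∫ a in (-n)..n, 2 * |a| * g |a| := by
      rw [intervalIntegral.integral_of_le (by linarith)]
    have hII : ∀ u v : ℝ, IntervalIntegrable (fun a : ℝ => 2 * |a| * g |a|) volume u v :=
      fun u v => hψ_cont.intervalIntegrable u v
    have e3 : ∫ a in (-n)..(0:ℝ), 2 * |a| * g |a| = ∫ a in (0:ℝ)..n, 2 * |a| * g |a| := by
      have := intervalIntegral.integral_comp_neg (a := (0:ℝ)) (b := n)
        (f := fun a : ℝ => 2 * |a| * g |a|)
      simp only [abs_neg, neg_zero] at this
      rw [← this]
    have e4 : ∫ a in (-n)..n, 2 * |a| * g |a| =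
        (∫ a in (-n)..(0:ℝ), 2 * |a| * g |a|) + ∫ a in (0:ℝ)..n, 2 * |a| * g |a| :=
      (intervalIntegral.integral_add_adjacent_intervals (hII _ _) (hII _ _)).symm
    have e5 : ∫ a in (0:ℝ)..n, 2 * |a| * g |a| = ∫ a in (0:ℝ)..n, 2 * (a * g a) := by
      apply intervalIntegral.integral_congr
      intro a ha
      rw [Set.uIcc_of_le hn0] at ha
      have habs : |a| = a := abs_of_nonneg ha.1
      show 2 * |a| * g |a| = 2 * (a * g a)
      rw [habs]; ring
    rw [e1, e2, e4, e3, e5]; ring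
  set I1 : ℝ := ∫ a in (0:ℝ)..(2*R), a * g a with hI1
  set I2 : ℝ := ∫ a in (2*R)..n, a * g a with hI2
  have hcont_ag : Continuous (fun a : ℝ => a * g a) := continuous_id.mul hg_cont
  have hsplitI : ∫ a in (0:ℝ)..n, 2 * (a * g a) = 2 * (I1 + I2) := by
    rw [intervalIntegral.integral_const_mul]
    have h := intervalIntegral.integral_add_adjacent_intervals (μ := volume)
      (hcont_ag.intervalIntegrable 0 (2*R)) (hcont_ag.intervalIntegrable (2*R) n)
    rw [← h]
  have bound1 : I1 ≤ 2 * R^2 := by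
    have hmono : I1 ≤ ∫ a in (0:ℝ)..(2*R), a := by
      apply intervalIntegral.integral_mono_on (by linarith)
        (hcont_ag.intervalIntegrable 0 (2*R)) (continuous_id.intervalIntegrable 0 (2*R))
      intro a ha
      have h1 := hg_le_one a
      have h2 := hg_nonneg a
      simp only [id_eq]
      nlinarith [ha.1]
    rw [integral_id] at hmono
    nlinarith
  have bound2 : I2 ≤ 4 * ∫ t in R..(n-R), qext t := by
    have hc4 : Continuous (fun a : ℝ => 4 * qext (a - R)) := by
      exact continuous_const.mul (qext_cont.comp (continuous_sub_right R))
    have hmono : I2 ≤ ∫ a in (2*R)..n, 4 * qext (a - R) := by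
      apply intervalIntegral.integral_mono_on hn2
        (hcont_ag.intervalIntegrable (2*R) n)
        (hc4.intervalIntegrable (2*R) n)
      intro a ha
      have ht : (0:ℝ) ≤ a - R := by linarith [ha.1]
      have hk := mul_qext_sq_le (a - R) ht
      have ha2 : a ≤ 2 * (a - R) := by linarith [ha.1]
      have hq2 : (0:ℝ) ≤ (qext (a - R))^2 := sq_nonneg _
      have : a * g a = a * (qext (a - R))^2 := by simp only [hg]
      rw [this]
      nlinarith
    have e : ∫ a in (2*R)..n, 4 * qext (a - R) = 4 * ∫ t in R..(n-R), qext t := by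
      rw [intervalIntegral.integral_const_mul, intervalIntegral.integral_comp_sub_right (fun t => qext t) R]
      have h2RR : 2*R - R = R := by ring
      rw [h2RR]
    rw [e] at hmono
    exact hmono
  have bound3 : ∫ t in R..(n-R), qext t ≤ Q (n - R) := by
    rw [hQ]
    have hsplit : (∫ t in (0:ℝ)..R, qext t) + ∫ t in R..(n-R), qext t =
        ∫ t in (0:ℝ)..(n-R), qext t :=
      intervalIntegral.integral_add_adjacent_intervals
        (qext_cont.intervalIntegrable 0 R) (qext_cont.intervalIntegrable R (n-R))
    have hpos : 0 ≤ ∫ t in (0:ℝ)..R, qext t :=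
      intervalIntegral.integral_nonneg hR (fun u _ => qext_nonneg u)
    linarith
  -- assemble
  have goal_eq : (∫ x in (S ×ˢ S : Set (ℝ × ℝ)), (qext (max |x.1| |x.2| - R))^2) =
      ∫ x, F x ∂(μ.prod μ) := by
    rw [← hvol]
  rw [goal_eq]
  have hQpos : 0 ≤ ∫ t in R..(n-R), qext t := by
    apply intervalIntegral.integral_nonneg (by linarith) (fun u _ => qext_nonneg u)
  calc ∫ x, F x ∂(μ.prod μ) ≤ ∫ x, (H x + H x.swap) ∂(μ.prod μ) := step1
    _ = 2 * ∫ x, H x ∂(μ.prod μ) := step2'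
    _ = 2 * ∫ a, (∫ b, H (a, b) ∂μ) ∂μ := by rw [step3]
    _ ≤ 2 * ∫ a, 2 * |a| * g |a| ∂μ := by linarith [step4]
    _ = 2 * (2 * (2 * (I1 + I2))) := by rw [step5, hsplitI]
    _ ≤ 16 * R^2 + 32 * Q (n - R) := by nlinarith [bound1, bound2, bound3, hQpos]
end

section
/- Let f : ℝ → ℝ be continuous, strictly increasing, surjective, and differentiable outside a countable closed set M ⊆ ℝ with continuous derivative on ℝ ∖ M. Then for every Borel-measurable g : ℝ → [0,∞], ∫ g(f(x)) |f'(x)| dx = ∫ g(y) dy, where f' is defined arbitrarily (Lebesgue-a.e. well-defined) on M. -/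
open MeasureTheory

theorem stmt_18 (f f' : ℝ → ℝ) (hcont : Continuous f) (hmono : StrictMono f)
    (hsurj : Function.Surjective f)
    (M : Set ℝ) (hMc : M.Countable) (hMcl : IsClosed M)
    (hderiv : ∀ x ∉ M, HasDerivAt f (f' x) x)
    (hcd : ContinuousOn f' Mᶜ) :
    ∀ g : ℝ → ENNReal, Measurable g →
      (∫⁻ x, g (f x) * ENNReal.ofReal |f' x|) = ∫⁻ y, g y := by
  intro g hg
  have hs : MeasurableSet Mᶜ := hMcl.measurableSet.compl
  have hd : ∀ x ∈ Mᶜ, HasFDerivWithinAt f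
      (ContinuousLinearMap.smulRight (1 : ℝ →L[ℝ] ℝ) (f' x)) Mᶜ x :=
    fun x hx => ((hderiv x hx).hasFDerivAt).hasFDerivWithinAt
  have hinj : Set.InjOn f Mᶜ := hmono.injective.injOn
  have key := lintegral_image_eq_lintegral_abs_det_fderiv_mul volume hs hd hinj g
  simp only [ContinuousLinearMap.smulRight_one_eq_toSpanSingleton, ContinuousLinearMap.det_toSpanSingleton] at key
  have hM0 : volume M = 0 := hMc.measure_zero _
  have himg : volume (f '' Mᶜ)ᶜ = 0 := by
    have hsub : (f '' Mᶜ)ᶜ ⊆ f '' M := by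
      intro y hy
      obtain ⟨x, rfl⟩ := hsurj y
      by_cases hx : x ∈ M
      · exact ⟨x, hx, rfl⟩
      · exact absurd (Set.mem_image_of_mem f hx) hy
    exact measure_mono_null hsub ((hMc.image f).measure_zero _)
  calc (∫⁻ x, g (f x) * ENNReal.ofReal |f' x|)
      = ∫⁻ x in Mᶜ, g (f x) * ENNReal.ofReal |f' x| := by
        refine ((setLIntegral_univ _).symm.trans ?_)
        exact (setLIntegral_congr (MeasureTheory.ae_eq_univ.2
          (by rwa [compl_compl]))).symm
    _ = ∫⁻ x in f '' Mᶜ, g x := by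
        rw [key]; congr 1; ext x; rw [mul_comm]
    _ = ∫⁻ y, g y := by
        exact (setLIntegral_congr (MeasureTheory.ae_eq_univ.2 himg)).trans
          (setLIntegral_univ g)
end
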